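/- For every integer N ≥ 1, the (N+1)-st term of the lower central series of Γ equals the subgroup {(0, p) : p ∈ (u−1)^N A} of Γ, i.e. Z^{N+1}(Γ) consists exactly of the pairs (0, p) with p ∈ ℤ[u,u^{−1}] divisible by (u−1)^N. -/

import Mathlib

open LaurentPolynomial
open scoped commutatorElement

/-- The automorphism of (the multiplicative version of) the additive group
`A = ℤ[u,u⁻¹]` given by multiplication by `u` (i.e. by `T 1`). -/
noncomputable def sigma : MulAut (Multiplicative (LaurentPolynomial ℤ)) :=
  AddEquiv.toMultiplicative (AddAut.mulLeft (isUnit_T (R := ℤ) 1).unit)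

/-- The action of `ℤ` on `A = ℤ[u,u⁻¹]`: `m` acts by multiplication by `u^m`. -/
noncomputable def phi : Multiplicative ℤ →* MulAut (Multiplicative (LaurentPolynomial ℤ)) :=
  zpowersHom _ sigma

/-- The semidirect product `Γ = ℤ ⋉ A`, where `m ∈ ℤ` acts on `A = ℤ[u,u⁻¹]` by
multiplication by `u^m`. An element `(m, p)` is `⟨Multiplicative.ofAdd p, Multiplicative.ofAdd m⟩`. -/
abbrev Gamma := SemidirectProduct (Multiplicative (LaurentPolynomial ℤ)) (Multiplicative ℤ) phi

lemma sigma_apply (x : Multiplicative (LaurentPolynomial ℤ)) :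
    Multiplicative.toAdd (sigma x) = T 1 * Multiplicative.toAdd x := by
  show ((isUnit_T (R := ℤ) 1).unit : LaurentPolynomial ℤ) * Multiplicative.toAdd x = _
  simp [IsUnit.unit_spec]

lemma phi_apply (m : ℤ) (x : Multiplicative (LaurentPolynomial ℤ)) :
    Multiplicative.toAdd (phi (Multiplicative.ofAdd m) x) = T m * Multiplicative.toAdd x := by
  have hinv : ∀ y, Multiplicative.toAdd (sigma⁻¹ y) = T (-1) * Multiplicative.toAdd y := by
    intro y
    have := sigma_apply (sigma⁻¹ y)
    rw [show sigma (sigma⁻¹ y) = y by simp] at this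
    have : T (-1) * Multiplicative.toAdd y = T (-1) * (T 1 * Multiplicative.toAdd (sigma⁻¹ y)) :=
      by rw [this]
    rw [← mul_assoc, ← T_add] at this
    simpa using this.symm
  induction m using Int.induction_on with
  | zero => simp [phi]
  | succ k ih =>
      have h1 : phi (Multiplicative.ofAdd ((k : ℤ) + 1)) x
          = sigma (phi (Multiplicative.ofAdd (k : ℤ)) x) := by
        rw [phi, zpowersHom_apply, toAdd_ofAdd, add_comm, zpow_add, zpow_one]
        rfl
      rw [h1, sigma_apply, ih, ← mul_assoc, ← T_add]
      ring_nf
  | pred k ih =>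
      have h1 : phi (Multiplicative.ofAdd (-(k : ℤ) - 1)) x
          = sigma⁻¹ (phi (Multiplicative.ofAdd (-(k : ℤ))) x) := by
        rw [phi, zpowersHom_apply, toAdd_ofAdd, show -(k:ℤ) - 1 = -1 + -k by ring, zpow_add,
          zpow_neg_one]
        rfl
      rw [h1, hinv, ih, ← mul_assoc, ← T_add]
      ring_nf

lemma phi_apply' (m : Multiplicative ℤ) (x : Multiplicative (LaurentPolynomial ℤ)) :
    Multiplicative.toAdd (phi m x) = T (Multiplicative.toAdd m) * Multiplicative.toAdd x :=
  phi_apply (Multiplicative.toAdd m) x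

lemma mul_left' (g h : Gamma) :
    Multiplicative.toAdd (g * h).left =
      Multiplicative.toAdd g.left + T (Multiplicative.toAdd g.right) * Multiplicative.toAdd h.left := by
  rw [SemidirectProduct.mul_left, toAdd_mul, phi_apply']

lemma inv_left' (g : Gamma) :
    Multiplicative.toAdd (g⁻¹).left =
      - (T (-Multiplicative.toAdd g.right) * Multiplicative.toAdd g.left) := by
  rw [SemidirectProduct.inv_left, phi_apply']
  simp

lemma commutator_right (g h : Gamma) : ⁅g, h⁆.right = 1 := by
  have : ⁅g, h⁆.right = ⁅g.right, h.right⁆ := by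
    simp [commutatorElement_def]
  rw [this]
  exact commutatorElement_eq_one_iff_commute.mpr (mul_comm _ _)

lemma commutator_left (g h : Gamma) :
    Multiplicative.toAdd ⁅g, h⁆.left =
      (1 - T (Multiplicative.toAdd h.right)) * Multiplicative.toAdd g.left
        + (T (Multiplicative.toAdd g.right) - 1) * Multiplicative.toAdd h.left := by
  simp only [commutatorElement_def, mul_left', inv_left', SemidirectProduct.mul_right,
    SemidirectProduct.inv_right, toAdd_mul, toAdd_inv]
  have e : ∀ k : ℤ, T (R := ℤ) k * T (-k) = 1 := by
    intro k; rw [← T_add]; simp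
  have h2 : Multiplicative.toAdd g.right + Multiplicative.toAdd h.right
      + -Multiplicative.toAdd g.right = Multiplicative.toAdd h.right := by ring
  rw [h2, T_add]
  linear_combination (-(T (Multiplicative.toAdd h.right) * Multiplicative.toAdd g.left))
      * e (Multiplicative.toAdd g.right)
    + (-(Multiplicative.toAdd h.left)) * e (Multiplicative.toAdd h.right)


lemma T_sub_one_dvd (m : ℤ) : ((T 1 : LaurentPolynomial ℤ) - 1) ∣ (T m - 1) := by
  induction m using Int.induction_on with
  | zero => simp
  | succ k ih =>
      obtain ⟨c, hc⟩ := ih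
      exact ⟨T k + c, by
        rw [show (k : ℤ) + 1 = 1 + k by ring, T_add]; linear_combination hc⟩
  | pred k ih =>
      obtain ⟨c, hc⟩ := ih
      refine ⟨T (-1) * (c - 1), ?_⟩
      have e1 : T (R := ℤ) (-1) * T 1 = 1 := by rw [← T_add]; simp
      have e2 : T (R := ℤ) (-(k:ℤ) - 1) = T (-1) * T (-(k:ℤ)) := by rw [← T_add]; ring_nf
      linear_combination e2 + T (R := ℤ) (-1) * hc + e1

noncomputable def SN (N : ℕ) : Subgroup Gamma where
  carrier := {g | g.right = 1 ∧ ∃ q : LaurentPolynomial ℤ,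
    Multiplicative.toAdd g.left = ((T 1 : LaurentPolynomial ℤ) - 1) ^ N * q}
  one_mem' := ⟨rfl, 0, by simp⟩
  mul_mem' := by
    rintro g h ⟨hg1, qg, hg2⟩ ⟨hh1, qh, hh2⟩
    refine ⟨by rw [SemidirectProduct.mul_right, hg1, hh1, mul_one], qg + qh, ?_⟩
    rw [mul_left', hg2, hh2, hg1]
    simp
    try ring
  inv_mem' := by
    rintro g ⟨hg1, qg, hg2⟩
    refine ⟨by rw [SemidirectProduct.inv_right, hg1, inv_one], -qg, ?_⟩
    rw [inv_left', hg2, hg1]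
    simp
    try ring

lemma lcs_eq (N : ℕ) (hN : 1 ≤ N) : (⊤ : Subgroup Gamma).lowerCentralSeries N = SN N := by
  induction N with
  | zero => omega
  | succ n ih =>
      rcases Nat.eq_or_lt_of_le hN with h1 | h1
      · -- N = 1
        have hn0 : n = 0 := by omega
        subst hn0
        have hrw : (⊤ : Subgroup Gamma).lowerCentralSeries (0 + 1) = ⁅(⊤ : Subgroup Gamma), ⊤⁆ := rfl
        rw [hrw]
        apply le_antisymm
        · rw [Subgroup.commutator_le]
          intro g _ h _
          refine ⟨commutator_right g h, ?_⟩
          obtain ⟨c1, hc1⟩ := T_sub_one_dvd (Multiplicative.toAdd h.right)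
          obtain ⟨c2, hc2⟩ := T_sub_one_dvd (Multiplicative.toAdd g.right)
          refine ⟨-c1 * Multiplicative.toAdd g.left + c2 * Multiplicative.toAdd h.left, ?_⟩
          rw [commutator_left, pow_one]
          linear_combination (-(Multiplicative.toAdd g.left)) * hc1
            + Multiplicative.toAdd h.left * hc2
        · rintro g ⟨hr, q, hq⟩
          have key : ⁅(SemidirectProduct.inr (Multiplicative.ofAdd (1:ℤ)) : Gamma),
              SemidirectProduct.inl (Multiplicative.ofAdd q)⁆ = g := by
            apply SemidirectProduct.ext
            · apply Multiplicative.toAdd.injective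
              rw [commutator_left, hq, pow_one]
              simp
            · rw [commutator_right, hr]
          rw [← key]
          exact Subgroup.commutator_mem_commutator (Subgroup.mem_top _) (Subgroup.mem_top _)
      · -- N = n+1 with n ≥ 1
        have hn1 : 1 ≤ n := by omega
        have hrw : (⊤ : Subgroup Gamma).lowerCentralSeries (n + 1) = ⁅(⊤ : Subgroup Gamma).lowerCentralSeries n, ⊤⁆ := rfl
        rw [hrw, ih hn1]
        apply le_antisymm
        · rw [Subgroup.commutator_le]
          rintro g ⟨hg1, qg, hg2⟩ h _
          refine ⟨commutator_right g h, ?_⟩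
          obtain ⟨c1, hc1⟩ := T_sub_one_dvd (Multiplicative.toAdd h.right)
          refine ⟨-c1 * qg, ?_⟩
          rw [commutator_left, hg2, hg1, pow_succ]
          simp
          linear_combination (-(((T 1 : LaurentPolynomial ℤ) - 1) ^ n * qg)) * hc1
        · rintro g ⟨hr, q, hq⟩
          have key : ⁅(SemidirectProduct.inl (Multiplicative.ofAdd
              (-(((T 1 : LaurentPolynomial ℤ) - 1) ^ n * q))) : Gamma),
              SemidirectProduct.inr (Multiplicative.ofAdd (1:ℤ))⁆ = g := by
            apply SemidirectProduct.ext
            · apply Multiplicative.toAdd.injective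
              rw [commutator_left, hq]
              simp
              try ring
            · rw [commutator_right, hr]
          rw [← key]
          exact Subgroup.commutator_mem_commutator
            ⟨rfl, -q, by simp; try ring⟩ (Subgroup.mem_top _)


/-- For `N ≥ 1`, the `(N+1)`-st term `Z^{N+1}(Γ)` of the lower central series
(`Z^1 = Γ`, `Z^{M+1} = [Z^M, Γ]`; in Mathlib `Z^{N+1}(Γ) = lowerCentralSeries Γ N`)
consists exactly of the pairs `(0, p)` with `p ∈ ℤ[u,u⁻¹]` divisible by `(u-1)^N`. -/
theorem mem_lowerCentralSeries_Gamma_iff (N : ℕ) (hN : 1 ≤ N) (g : Gamma) :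
    g ∈ (⊤ : Subgroup Gamma).lowerCentralSeries N ↔
      (g.right = 1 ∧ ∃ q : LaurentPolynomial ℤ,
        Multiplicative.toAdd g.left = ((T 1 : LaurentPolynomial ℤ) - 1) ^ N * q) := by
  rw [lcs_eq N hN]
  rfl
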